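/- If a connected graph G is not 2-linked, then for two agents the egalitarian price of connectivity of G is at least 2. Concretely: for disjoint vertex pairs (a,b) and (c,d) witnessing non-2-linkedness, the instance where agent 1 values a and b at 1/2 each and agent 2 values c and d at 1/2 each has unconstrained optimal egalitarian welfare 1, but every connected allocation has egalitarian welfare at most 1/2. -/

import Mathlib

def ConnB {V : Type*} (G : SimpleGraph V) (s : Finset V) : Prop :=
  s = ∅ ∨ (G.induce (s : Set V)).Connected

def IsAlloc {V : Type*} [Fintype V] [DecidableEq V] {n : ℕ} (A : Fin n → Finset V) : Prop :=
  (∀ i j : Fin n, i ≠ j → Disjoint (A i) (A j)) ∧ Finset.univ.biUnion A = Finset.univ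

private lemma sum_half_ite {V : Type*} [DecidableEq V] (s : Finset V) (x y : V)
    (hxy : x ≠ y) :
    ∑ v ∈ s, (if v = x ∨ v = y then (1 : ℝ) / 2 else 0)
      = (if x ∈ s then (1 : ℝ) / 2 else 0) + (if y ∈ s then (1 : ℝ) / 2 else 0) := by
  have : ∀ v ∈ s, (if v = x ∨ v = y then (1 : ℝ) / 2 else 0)
      = (if v = x then (1 : ℝ) / 2 else 0) + (if v = y then (1 : ℝ) / 2 else 0) := by
    intro v _
    by_cases h1 : v = x <;> by_cases h2 : v = y <;> simp_all
  rw [Finset.sum_congr rfl this, Finset.sum_add_distrib,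
    Finset.sum_ite_eq' s x (fun _ => (1 : ℝ) / 2),
    Finset.sum_ite_eq' s y (fun _ => (1 : ℝ) / 2)]

/-- Get a walk in `G` with support inside `s` from connectivity of the induced graph. -/
private lemma walk_in_induce {V : Type*} (G : SimpleGraph V) (s : Set V)
    (hconn : (G.induce s).Connected) (x y : V) (hx : x ∈ s) (hy : y ∈ s) :
    ∃ p : G.Walk x y, ∀ v ∈ p.support, v ∈ s := by
  obtain ⟨q⟩ := hconn ⟨x, hx⟩ ⟨y, hy⟩
  refine ⟨q.map (SimpleGraph.Embedding.induce s).toHom, ?_⟩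
  intro v hv
  replace hv : v ∈ (q.map (SimpleGraph.Embedding.induce s).toHom).support := hv
  rw [SimpleGraph.Walk.support_map, List.mem_map] at hv
  obtain ⟨⟨w, hw⟩, _, rfl⟩ := hv
  exact hw

/-- if `G` is not 2-linked, witnessed by disjoint pairs `(a,b)` and `(c,d)` with no
two vertex-disjoint connecting paths, then in the instance where agent 1 values `a, b` at `1/2`
each and agent 2 values `c, d` at `1/2` each, the unconstrained optimal egalitarian welfare is
`1` (some allocation gives both agents utility `1`), but every connected allocation has
egalitarian welfare at most `1/2`.  Hence the egalitarian price of connectivity is at least 2. -/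
theorem egal_poc_not_two_linked {V : Type*} [Fintype V] [DecidableEq V]
    (G : SimpleGraph V) (hG : G.Connected)
    (a b c d : V) (hnodup : ([a, b, c, d] : List V).Nodup)
    (hlink : ¬ ∃ (p : G.Walk a b) (q : G.Walk c d), p.support.Disjoint q.support)
    (u : Fin 2 → V → ℝ)
    (hu0 : ∀ v, u 0 v = if v = a ∨ v = b then (1 : ℝ) / 2 else 0)
    (hu1 : ∀ v, u 1 v = if v = c ∨ v = d then (1 : ℝ) / 2 else 0) :
    (∃ A : Fin 2 → Finset V, IsAlloc A ∧ ∀ i, ∑ v ∈ A i, u i v = 1) ∧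
    (∀ B : Fin 2 → Finset V, IsAlloc B → (∀ i, ConnB G (B i)) →
      ∃ i, ∑ v ∈ B i, u i v ≤ 1 / 2) := by
  simp only [List.nodup_cons, List.mem_cons, List.mem_singleton, List.not_mem_nil,
    List.nodup_nil, or_false, not_or] at hnodup
  obtain ⟨⟨hab, hac, had⟩, ⟨hbc, hbd⟩, hcd, -⟩ := hnodup
  constructor
  · refine ⟨![{a, b}, {a, b}ᶜ], ⟨?_, ?_⟩, ?_⟩
    · intro i j hij
      fin_cases i <;> fin_cases j <;> simp_all [disjoint_compl_right, disjoint_compl_left]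
    · ext v
      simp [Fin.exists_fin_two]
      tauto
    · intro i
      fin_cases i
      · show ∑ v ∈ ({a, b} : Finset V), u 0 v = 1
        rw [Finset.sum_congr rfl (fun v _ => hu0 v), sum_half_ite _ _ _ hab]
        simp; norm_num
      · show ∑ v ∈ ({a, b} : Finset V)ᶜ, u 1 v = 1
        rw [Finset.sum_congr rfl (fun v _ => hu1 v), sum_half_ite _ _ _ hcd]
        have hc : c ∈ ({a, b} : Finset V)ᶜ := by simp [Ne.symm hac, Ne.symm hbc]
        have hd : d ∈ ({a, b} : Finset V)ᶜ := by simp [Ne.symm had, Ne.symm hbd]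
        rw [if_pos hc, if_pos hd]; norm_num
  · intro B hB hconn
    by_contra h
    push_neg at h
    have h0 : (1 : ℝ) / 2 < ∑ v ∈ B 0, u 0 v := h 0
    have h1 : (1 : ℝ) / 2 < ∑ v ∈ B 1, u 1 v := h 1
    rw [Finset.sum_congr rfl (fun v _ => hu0 v), sum_half_ite _ _ _ hab] at h0
    rw [Finset.sum_congr rfl (fun v _ => hu1 v), sum_half_ite _ _ _ hcd] at h1
    have ha0 : a ∈ B 0 := by by_contra hc'; simp [hc'] at h0; split_ifs at h0 <;> linarith
    have hb0 : b ∈ B 0 := by by_contra hc'; simp [hc'] at h0; split_ifs at h0 <;> linarith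
    have hc1 : c ∈ B 1 := by by_contra hc'; simp [hc'] at h1; split_ifs at h1 <;> linarith
    have hd1 : d ∈ B 1 := by by_contra hc'; simp [hc'] at h1; split_ifs at h1 <;> linarith
    have hB0 : (G.induce ((B 0 : Finset V) : Set V)).Connected := by
      rcases hconn 0 with h' | h'
      · exact absurd (h' ▸ ha0) (Finset.notMem_empty a)
      · exact h'
    have hB1 : (G.induce ((B 1 : Finset V) : Set V)).Connected := by
      rcases hconn 1 with h' | h'
      · exact absurd (h' ▸ hc1) (Finset.notMem_empty c)
      · exact h'
    obtain ⟨p, hp⟩ := walk_in_induce G _ hB0 a b (by simp [ha0]) (by simp [hb0])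
    obtain ⟨q, hq⟩ := walk_in_induce G _ hB1 c d (by simp [hc1]) (by simp [hd1])
    refine hlink ⟨p, q, ?_⟩
    intro v hv hv'
    have h01 : Disjoint (B 0) (B 1) := hB.1 0 1 (by decide)
    exact (Finset.disjoint_left.mp h01) (hp v hv) (hq v hv')
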